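/- Let a be a nonempty list of even nonzero integers. Then d([a]) = d([rev(a)]) and d([a]) = d([−a]), where rev(a) is the reversal of a and −a is the list obtained by negating every entry of a. -/

import Mathlib

/-- The continued fraction value `[a₁, …, aₙ] = 1/(a₁ + 1/(a₂ + ⋯ + 1/aₙ))` of a
list of integers, defined recursively with `[] = 0`, using the total division of `ℚ`. -/
def cfVal : List ℤ → ℚ
  | [] => 0
  | a :: l => 1 / ((a : ℚ) + cfVal l)

/-- `u` and `v` are the two Farey parents of `x`: there are integers `a, b, c, d` with
`1 ≤ b, d`, `b + d = q`, `a + c = p`, `a·d − b·c = ±1`, `u = a/b` and `v = c/d`,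
where `x = p/q` in lowest terms. -/
def IsFareyParents (x u v : ℚ) : Prop :=
  ∃ a b c d : ℤ, 1 ≤ b ∧ 1 ≤ d ∧ b + d = (x.den : ℤ) ∧ a + c = x.num ∧
    (a * d - b * c = 1 ∨ a * d - b * c = -1) ∧
    u = (a : ℚ) / (b : ℚ) ∧ v = (c : ℚ) / (d : ℚ)

/-- The graph of the depth function on `ℚ`: integers have depth `0`, and otherwise
`d(x) = 1 + min(d(u), d(v))` where `u, v` are the two Farey parents of `x`. -/
inductive DepthRel : ℚ → ℕ → Prop
  | int (x : ℚ) (h : x.den = 1) : DepthRel x 0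
  | step (x u v : ℚ) (m k : ℕ) (h : x.den ≠ 1) (hp : IsFareyParents x u v)
      (hu : DepthRel u m) (hv : DepthRel v k) : DepthRel x (1 + min m k)

/-- The depth `d(x)` of a rational number. -/
noncomputable def fareyDepth (x : ℚ) : ℕ := sInf {n | DepthRel x n}

namespace CFAux

def cep : List ℤ → ℤ × ℤ
  | [] => (1, 0)
  | a :: l => (a * (cep l).1 + (cep l).2, (cep l).1)

def cfp : List ℤ → ℤ × ℤ
  | [] => (0, 1)
  | a :: l => (a * (cfp l).1 + (cfp l).2, (cfp l).1)

def ce (l : List ℤ) : ℤ := (cep l).1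
def cg (l : List ℤ) : ℤ := (cep l).2
def cf (l : List ℤ) : ℤ := (cfp l).1
def ch (l : List ℤ) : ℤ := (cfp l).2

@[simp] lemma ce_nil : ce [] = 1 := rfl
@[simp] lemma cg_nil : cg [] = 0 := rfl
@[simp] lemma cf_nil : cf [] = 0 := rfl
@[simp] lemma ch_nil : ch [] = 1 := rfl
@[simp] lemma ce_cons (a : ℤ) (l : List ℤ) : ce (a :: l) = a * ce l + cg l := rfl
@[simp] lemma cg_cons (a : ℤ) (l : List ℤ) : cg (a :: l) = ce l := rfl
@[simp] lemma cf_cons (a : ℤ) (l : List ℤ) : cf (a :: l) = a * cf l + ch l := rfl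
@[simp] lemma ch_cons (a : ℤ) (l : List ℤ) : ch (a :: l) = cf l := rfl

lemma append4 (P S : List ℤ) :
    ce (P ++ S) = ce P * ce S + cf P * cg S ∧
    cf (P ++ S) = ce P * cf S + cf P * ch S ∧
    cg (P ++ S) = cg P * ce S + ch P * cg S ∧
    ch (P ++ S) = cg P * cf S + ch P * ch S := by
  induction P with
  | nil => simp
  | cons a P ih =>
    obtain ⟨h1, h2, h3, h4⟩ := ih
    refine ⟨?_, ?_, ?_, ?_⟩ <;> simp [h1, h2, h3, h4] <;> ring

lemma rev4 (B : List ℤ) :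
    ce B.reverse = ce B ∧ cf B.reverse = cg B ∧ cg B.reverse = cf B ∧ ch B.reverse = ch B := by
  induction B with
  | nil => simp
  | cons a l ih =>
    obtain ⟨h1, h2, h3, h4⟩ := ih
    have := append4 l.reverse [a]
    simp only [List.reverse_cons]
    obtain ⟨g1, g2, g3, g4⟩ := this
    refine ⟨?_, ?_, ?_, ?_⟩ <;>
      simp [g1, g2, g3, g4, h1, h2, h3, h4] <;> ring

lemma det4 (B : List ℤ) :
    ce B * ch B - cf B * cg B = 1 ∨ ce B * ch B - cf B * cg B = -1 := by
  induction B with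
  | nil => left; simp
  | cons a l ih =>
    have h : ce (a :: l) * ch (a :: l) - cf (a :: l) * cg (a :: l)
        = -(ce l * ch l - cf l * cg l) := by simp; ring
    rcases ih with h' | h'
    · right; rw [h, h']
    · left; rw [h, h']; ring

lemma cop_ge (B : List ℤ) : IsCoprime (cg B) (ce B) := by
  rcases det4 B with h | h
  · exact ⟨-cf B, ch B, by linarith⟩
  · exact ⟨cf B, -ch B, by linarith⟩

lemma cop_fe (B : List ℤ) : IsCoprime (cf B) (ce B) := by
  rcases det4 B with h | h
  · exact ⟨-cg B, ch B, by linarith⟩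
  · exact ⟨cg B, -ch B, by linarith⟩

def SufRed : List ℤ → Prop
  | [] => True
  | a :: l => ce (a :: l) ≠ 0 ∧ SufRed l

lemma ce_ne_of_sufRed {l : List ℤ} (h : SufRed l) : ce l ≠ 0 := by
  cases l with
  | nil => simp
  | cons a l => exact h.1

lemma cfVal_cons (a : ℤ) (l : List ℤ) : cfVal (a :: l) = ((a : ℚ) + cfVal l)⁻¹ := by
  rw [cfVal, one_div]

lemma cfVal_neg : ∀ l : List ℤ, cfVal (l.map (fun a => -a)) = -cfVal l := by
  intro l
  induction l with
  | nil => simp [cfVal]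
  | cons a l ih =>
    simp only [List.map_cons, cfVal_cons, ih]
    push_cast
    rw [← neg_add, inv_neg]

lemma cfVal_cons_div (a : ℤ) (C : List ℤ) (h : SufRed C) :
    cfVal (a :: C) = (cg (a :: C) : ℚ) / (ce (a :: C) : ℚ) := by
  have hC : cfVal C = (cg C : ℚ) / (ce C : ℚ) := by
    clear a
    induction C with
    | nil => simp [cfVal]
    | cons b m ih =>
      have hm : SufRed m := h.2
      have hce : (ce m : ℚ) ≠ 0 := by exact_mod_cast ce_ne_of_sufRed hm
      have ihm := ih hm
      rw [cfVal_cons, ihm]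
      have : (b : ℚ) + (cg m : ℚ) / (ce m : ℚ) = ((b * ce m + cg m : ℤ) : ℚ) / (ce m : ℚ) := by
        field_simp
        push_cast
        ring
      rw [this, ← one_div, one_div_div]
      simp
  have hce : (ce C : ℚ) ≠ 0 := by exact_mod_cast ce_ne_of_sufRed h
  rw [cfVal_cons, hC]
  have : (a : ℚ) + (cg C : ℚ) / (ce C : ℚ) = ((a * ce C + cg C : ℤ) : ℚ) / (ce C : ℚ) := by
    field_simp
    push_cast
    ring
  rw [this, ← one_div, one_div_div]
  simp

lemma cfVal_sufRed : ∀ l : List ℤ, SufRed l → cfVal l = (cg l : ℚ) / (ce l : ℚ) := by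
  intro l h
  cases l with
  | nil => simp [cfVal]
  | cons a C => exact cfVal_cons_div a C h.2

lemma sufRed_drop : ∀ (l : List ℤ) (i : ℕ), SufRed l → SufRed (l.drop i) := by
  intro l
  induction l with
  | nil => intro i _; simp [SufRed]
  | cons a m ih =>
    intro i h
    cases i with
    | zero => exact h
    | succ j => exact ih j h.2

lemma sufRed_iff (l : List ℤ) : SufRed l ↔ ∀ S, S <:+ l → ce S ≠ 0 := by
  induction l with
  | nil =>
    constructor
    · intro _ S hS
      have : S = [] := List.eq_nil_of_suffix_nil hS
      simp [this]
    · intro _; trivial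
  | cons a m ih =>
    constructor
    · intro h S hS
      rcases List.suffix_cons_iff.1 hS with rfl | hS'
      · exact h.1
      · exact ih.1 h.2 S hS'
    · intro h
      exact ⟨h _ (List.suffix_refl _), ih.2 fun S hS => h S (hS.trans (List.suffix_cons a m))⟩



lemma ratNumDen {g e : ℤ} (he : 0 < e) (hco : IsCoprime g e) {x : ℚ}
    (hx : (g : ℚ) / (e : ℚ) = x) : x.num = g ∧ (x.den : ℤ) = e := by
  have hcop : Nat.Coprime g.natAbs e.natAbs := Int.isCoprime_iff_gcd_eq_one.1 hco
  constructor
  · rw [← hx]; exact Rat.num_div_eq_of_coprime he hcop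
  · rw [← hx]; exact Rat.den_div_eq_of_coprime he hcop

lemma ratNumDen' {g e : ℤ} (he : e ≠ 0) (hco : IsCoprime g e) {x : ℚ}
    (hx : (g : ℚ) / (e : ℚ) = x) :
    ∃ ε : ℤ, (ε = 1 ∨ ε = -1) ∧ x.num = ε * g ∧ (x.den : ℤ) = ε * e := by
  rcases he.lt_or_gt with h | h
  · have hx' : ((-g : ℤ) : ℚ) / ((-e : ℤ) : ℚ) = x := by
      push_cast
      rw [neg_div_neg_eq]; exact hx
    obtain ⟨h1, h2⟩ := ratNumDen (by omega) (hco.neg_left.neg_right) hx'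
    exact ⟨-1, Or.inr rfl, by omega, by omega⟩
  · obtain ⟨h1, h2⟩ := ratNumDen h hco hx
    exact ⟨1, Or.inl rfl, by omega, by omega⟩

lemma coprime_num_den (x : ℚ) : IsCoprime x.num (x.den : ℤ) := by
  rw [Int.isCoprime_iff_gcd_eq_one]
  exact_mod_cast x.reduced

lemma den_pos' (x : ℚ) : (0 : ℤ) < (x.den : ℤ) := by exact_mod_cast x.pos

lemma num_den_shift (x : ℚ) (t : ℤ) :
    (x + t).num = x.num + t * x.den ∧ ((x + t).den : ℤ) = (x.den : ℤ) := by
  have hd : ((x.den : ℕ) : ℚ) ≠ 0 := by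
    exact_mod_cast x.pos.ne'
  have hco : IsCoprime (x.num + t * x.den) (x.den : ℤ) := by
    have := (coprime_num_den x).add_mul_right_left t
    simpa [mul_comm] using this
  have hx : ((x.num + t * x.den : ℤ) : ℚ) / ((x.den : ℤ) : ℚ) = x + t := by
    push_cast
    rw [add_div, Rat.num_div_den, mul_div_assoc, div_self hd, mul_one]
  exact ratNumDen (den_pos' x) hco hx

lemma num_den_sub (x : ℚ) (t : ℤ) :
    (x - t).num = x.num - t * x.den ∧ ((x - t).den : ℤ) = (x.den : ℤ) := by
  have h := num_den_shift x (-t)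
  push_cast at h
  rw [← sub_eq_add_neg] at h
  constructor
  · rw [h.1]; ring
  · exact h.2

lemma parents_swap {x u v : ℚ} (h : IsFareyParents x u v) : IsFareyParents x v u := by
  obtain ⟨a, b, c, d, hb, hd, hbd, hac, hdet, hu, hv⟩ := h
  refine ⟨c, d, a, b, hd, hb, by omega, by omega, ?_, hv, hu⟩
  rcases hdet with h | h
  · right; linarith
  · left; linarith

lemma parents_neg {x u v : ℚ} (h : IsFareyParents x u v) : IsFareyParents (-x) (-u) (-v) := by
  obtain ⟨a, b, c, d, hb, hd, hbd, hac, hdet, hu, hv⟩ := h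
  refine ⟨-a, b, -c, d, hb, hd, ?_, ?_, ?_, ?_, ?_⟩
  · simpa using hbd
  · simp [Rat.neg_num]; omega
  · rcases hdet with h | h
    · right; linarith
    · left; linarith
  · rw [hu]; push_cast; try ring
  · rw [hv]; push_cast; try ring

lemma parents_shift {x u v : ℚ} (t : ℤ) (h : IsFareyParents x u v) :
    IsFareyParents (x + t) (u + t) (v + t) := by
  obtain ⟨a, b, c, d, hb, hd, hbd, hac, hdet, hu, hv⟩ := h
  obtain ⟨hn, hdd⟩ := num_den_shift x t
  refine ⟨a + t * b, b, c + t * d, d, hb, hd, by omega, by rw [hn, ← hac, ← hbd]; ring, ?_, ?_, ?_⟩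
  · rcases hdet with h | h
    · left; linarith [h, (by ring : (a + t * b) * d - b * (c + t * d) = a * d - b * c)]
    · right; linarith [h, (by ring : (a + t * b) * d - b * (c + t * d) = a * d - b * c)]
  · have hbne : (b : ℚ) ≠ 0 := by
      have : (0 : ℤ) < b := hb
      exact_mod_cast this.ne'
    rw [hu]; push_cast; field_simp; try ring
  · have hdne : (d : ℚ) ≠ 0 := by
      have : (0 : ℤ) < d := hd
      exact_mod_cast this.ne'
    rw [hv]; push_cast; field_simp; try ring



lemma parents_inv {x u v : ℚ} (hx : x.den ≠ 1) (hxi : (x⁻¹).den ≠ 1)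
    (h : IsFareyParents x u v) : IsFareyParents x⁻¹ u⁻¹ v⁻¹ := by
  obtain ⟨a, b, c, d, hb, hd, hbd, hac, hdet, hu, hv⟩ := h
  set p := x.num with hp
  set q : ℤ := (x.den : ℤ) with hqdef
  have hq0 : 0 < q := den_pos' x
  have hk1 : q * a = p * b + (a * d - b * c) := by
    rw [← hac, ← hbd]; ring
  have hk2 : q * c = p * d - (a * d - b * c) := by
    rw [← hac, ← hbd]; ring
  have hqne : (q : ℚ) ≠ 0 := by exact_mod_cast hq0.ne'
  have hxval : (p : ℚ) / (q : ℚ) = x := by exact_mod_cast Rat.num_div_den x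
  have hxinv : x⁻¹ = (q : ℚ) / (p : ℚ) := by rw [← hxval, inv_div]
  have hp0 : p ≠ 0 := by
    intro h0
    apply hx
    have hx0 : x = 0 := by rw [← hxval, h0]; simp
    rw [hx0]; rfl
  have hp1 : p ≠ 1 := by
    intro h1
    apply hxi
    rw [hxinv, h1]; simp
  have hpm1 : p ≠ -1 := by
    intro h1
    apply hxi
    rw [hxinv, h1]
    have : (q : ℚ) / ((-1 : ℤ) : ℚ) = ((-q : ℤ) : ℚ) := by push_cast; ring
    rw [show ((-1 : ℤ) : ℚ) = ((-1 : ℤ) : ℚ) from rfl] at this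
    push_cast at this ⊢
    rw [this]
    exact Rat.den_intCast _
  have hbq : (b : ℚ) ≠ 0 := by
    have : (0 : ℤ) < b := hb
    exact_mod_cast this.ne'
  have hdq : (d : ℚ) ≠ 0 := by
    have : (0 : ℤ) < d := hd
    exact_mod_cast this.ne'
  rcases lt_or_gt_of_ne hp0 with hpneg | hppos
  · -- p ≤ -2
    have hp2 : p ≤ -2 := by omega
    have hqa : q * a ≤ -1 := by
      have hpb : p * b ≤ -2 := by nlinarith
      rcases hdet with h | h <;> omega
    have ha : a ≤ -1 := by
      by_contra hcon
      push_neg at hcon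
      nlinarith
    have hqc : q * c ≤ -1 := by
      have hpd : p * d ≤ -2 := by nlinarith
      rcases hdet with h | h <;> omega
    have hc : c ≤ -1 := by
      by_contra hcon
      push_neg at hcon
      nlinarith
    have hxinv' : ((-q : ℤ) : ℚ) / ((-p : ℤ) : ℚ) = x⁻¹ := by
      rw [hxinv]; push_cast; rw [neg_div_neg_eq]
    obtain ⟨hnum, hden⟩ := ratNumDen (by omega) ((coprime_num_den x).symm.neg_left.neg_right) hxinv'
    refine ⟨-b, -a, -d, -c, by omega, by omega, by rw [hden]; omega, by rw [hnum]; omega, ?_, ?_, ?_⟩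
    · rcases hdet with h | h
      · right; linarith [(by ring : (-b) * (-c) - (-a) * (-d) = -(a * d - b * c))]
      · left; linarith [(by ring : (-b) * (-c) - (-a) * (-d) = -(a * d - b * c))]
    · rw [hu, inv_div]
      push_cast
      rw [neg_div_neg_eq]
    · rw [hv, inv_div]
      push_cast
      rw [neg_div_neg_eq]
  · -- p ≥ 2
    have hp2 : 2 ≤ p := by omega
    have hqa : 1 ≤ q * a := by
      have hpb : 2 ≤ p * b := by nlinarith
      rcases hdet with h | h <;> omega
    have ha : 1 ≤ a := by
      by_contra hcon
      push_neg at hcon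
      nlinarith
    have hqc : 1 ≤ q * c := by
      have hpd : 2 ≤ p * d := by nlinarith
      rcases hdet with h | h <;> omega
    have hc : 1 ≤ c := by
      by_contra hcon
      push_neg at hcon
      nlinarith
    obtain ⟨hnum, hden⟩ := ratNumDen (by omega) ((coprime_num_den x).symm) hxinv.symm
    refine ⟨b, a, d, c, ha, hc, by rw [hden]; omega, by rw [hnum]; omega, ?_, ?_, ?_⟩
    · rcases hdet with h | h
      · right; linarith [(by ring : b * c - a * d = -(a * d - b * c))]
      · left; linarith [(by ring : b * c - a * d = -(a * d - b * c))]
    · rw [hu, inv_div]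
    · rw [hv, inv_div]

lemma depthRel_neg {x : ℚ} {n : ℕ} (h : DepthRel x n) : DepthRel (-x) n := by
  induction h with
  | int x h => exact .int _ (by rw [Rat.neg_den]; exact h)
  | step x u v m k h hp hu hv ihu ihv =>
    exact .step _ _ _ _ _ (by rw [Rat.neg_den]; exact h) (parents_neg hp) ihu ihv

lemma depthRel_shift {x : ℚ} {n : ℕ} (t : ℤ) (h : DepthRel x n) : DepthRel (x + t) n := by
  induction h with
  | int y h =>
    refine .int _ ?_
    have := (num_den_shift y t).2
    omega
  | step y u v m k h hp hu hv ihu ihv =>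
    refine .step _ _ _ _ _ ?_ (parents_shift t hp) ihu ihv
    have := (num_den_shift y t).2
    omega

lemma depthRel_sub {x : ℚ} {n : ℕ} (t : ℤ) (h : DepthRel x n) : DepthRel (x - t) n := by
  have := depthRel_shift (-t) h
  push_cast at this
  rw [← sub_eq_add_neg] at this
  exact this

lemma depthRel_zero_den {x : ℚ} (h : x.den = 1) : DepthRel x 0 := .int x h

lemma recip_nat_pos : ∀ n : ℕ, DepthRel (((n : ℤ) + 2 : ℚ))⁻¹ 1 := by
  intro n
  induction n with
  | zero =>
    have hval : ((1 : ℤ) : ℚ) / ((2 : ℤ) : ℚ) = (((0 : ℤ) + 2 : ℚ))⁻¹ := by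
      push_cast; rw [one_div]; norm_num
    obtain ⟨hnum, hden⟩ := ratNumDen (by norm_num) (isCoprime_one_left) hval
    have hden1 : (((0 : ℤ) + 2 : ℚ))⁻¹.den ≠ 1 := by omega
    have hp : IsFareyParents (((0 : ℤ) + 2 : ℚ))⁻¹ 0 1 := by
      refine ⟨0, 1, 1, 1, le_refl _, le_refl _, by omega, by omega, by norm_num, by norm_num, by norm_num⟩
    have h0 : DepthRel 0 0 := .int 0 rfl
    have h1 : DepthRel 1 0 := .int 1 rfl
    have := DepthRel.step _ _ _ 0 0 hden1 hp h0 h1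
    simpa using this
  | succ m ih =>
    have hval : ((1 : ℤ) : ℚ) / (((m : ℤ) + 3 : ℤ) : ℚ) = ((((m : ℕ) + 1 : ℕ) : ℤ) + 2 : ℚ)⁻¹ := by
      push_cast; rw [one_div]; norm_num; ring_nf
    obtain ⟨hnum, hden⟩ := ratNumDen (by omega) (isCoprime_one_left) hval
    have hden1 : ((((m : ℕ) + 1 : ℕ) : ℤ) + 2 : ℚ)⁻¹.den ≠ 1 := by omega
    have hp : IsFareyParents ((((m : ℕ) + 1 : ℕ) : ℤ) + 2 : ℚ)⁻¹ 0 (((m : ℤ) + 2 : ℚ))⁻¹ := by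
      refine ⟨0, 1, 1, (m : ℤ) + 2, le_refl _, by omega, by omega, by omega, by norm_num, by norm_num, ?_⟩
      push_cast
      rw [one_div]
    have h0 : DepthRel 0 0 := .int 0 rfl
    have := DepthRel.step _ _ _ 0 1 hden1 hp h0 ih
    simpa using this

lemma recip_int_pos (z : ℤ) (hz : 2 ≤ z) : DepthRel ((z : ℚ)⁻¹) 1 := by
  obtain ⟨n, rfl⟩ : ∃ n : ℕ, z = (n : ℤ) + 2 := ⟨(z - 2).toNat, by omega⟩
  have := recip_nat_pos n
  have heq : (((n : ℤ) + 2 : ℚ)) = (((n : ℤ) + 2 : ℤ) : ℚ) := by push_cast; ring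
  rwa [heq] at this

lemma recip_int_abs {z : ℤ} (hz : 2 ≤ |z|) : DepthRel ((z : ℚ)⁻¹) 1 := by
  rcases abs_cases z with ⟨h1, _⟩ | ⟨h1, _⟩
  · exact recip_int_pos z (by omega)
  · have := depthRel_neg (recip_int_pos (-z) (by omega))
    have heq : -((-z : ℤ) : ℚ)⁻¹ = (z : ℚ)⁻¹ := by
      push_cast; rw [inv_neg, neg_neg]
    rwa [heq] at this

lemma recip_le {x : ℚ} {n : ℕ} (h : DepthRel x n) : ∃ m, m ≤ n + 1 ∧ DepthRel x⁻¹ m := by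
  induction h with
  | int y hy =>
    by_cases hd : (y⁻¹).den = 1
    · exact ⟨0, by omega, .int _ hd⟩
    · have hyz : ((y.num : ℤ) : ℚ) = y := Rat.coe_int_num_of_den_eq_one hy
      have habs : 2 ≤ |y.num| := by
        by_contra hcon
        push_neg at hcon
        obtain ⟨hc1, hc2⟩ := abs_lt.1 hcon
        have h3 : y.num = -1 ∨ y.num = 0 ∨ y.num = 1 := by omega
        exfalso
        apply hd
        rcases h3 with h | h | h
        · rw [← hyz, h,
            show ((-1 : ℤ) : ℚ)⁻¹ = ((-1 : ℤ) : ℚ) by norm_num]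
          exact Rat.den_intCast _
        · rw [← hyz, h]
          simp
        · rw [← hyz, h,
            show ((1 : ℤ) : ℚ)⁻¹ = ((1 : ℤ) : ℚ) by norm_num]
          exact Rat.den_intCast _
      refine ⟨1, by omega, ?_⟩
      rw [← hyz]
      exact recip_int_abs habs
  | step y u v m k hden hp hu hv ihu ihv =>
    by_cases hd : (y⁻¹).den = 1
    · exact ⟨0, by omega, .int _ hd⟩
    · obtain ⟨m1, hm1, hu'⟩ := ihu
      obtain ⟨m2, hm2, hv'⟩ := ihv
      refine ⟨1 + min m1 m2, by omega, ?_⟩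
      exact .step _ _ _ _ _ hd (parents_inv hden hd hp) hu' hv'

lemma exists_depthRel_cfVal : ∀ B : List ℤ, ∃ m, m ≤ B.length ∧ DepthRel (cfVal B) m := by
  intro B
  induction B with
  | nil => exact ⟨0, le_refl _, .int 0 rfl⟩
  | cons a C ih =>
    obtain ⟨m, hm, h⟩ := ih
    have h2 : DepthRel (cfVal C + a) m := depthRel_shift a h
    obtain ⟨k, hk, h3⟩ := recip_le h2
    refine ⟨k, by simpa using by omega, ?_⟩
    rw [cfVal_cons, add_comm]
    exact h3

lemma den_inv_eq_one {r : ℚ} (h : r.num = 1 ∨ r.num = -1) : (r⁻¹).den = 1 := by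
  have hval : (r.num : ℚ) / (r.den : ℚ) = r := Rat.num_div_den r
  rcases h with h | h
  · have heq : r⁻¹ = ((r.den : ℤ) : ℚ) := by
      rw [← hval, h, inv_div]
      push_cast
      simp
    rw [heq]
    exact Rat.den_intCast _
  · have h' : (-r).num = 1 := by rw [Rat.neg_num, h]; ring
    have hval' : ((-r).num : ℚ) / ((-r).den : ℚ) = -r := Rat.num_div_den (-r)
    have heq : (-r)⁻¹ = (((-r).den : ℤ) : ℚ) := by
      rw [← hval', h', inv_div]
      push_cast
      simp
    have h2 : ((-r)⁻¹).den = 1 := by rw [heq]; exact Rat.den_intCast _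
    rwa [inv_neg, Rat.neg_den] at h2

lemma fd_le {x : ℚ} {n : ℕ} (h : DepthRel x n) : fareyDepth x ≤ n := Nat.sInf_le h

lemma fd_neg (x : ℚ) : fareyDepth (-x) = fareyDepth x := by
  unfold fareyDepth
  congr 1
  ext n
  simp only [Set.mem_setOf_eq]
  constructor
  · intro h
    have := depthRel_neg h
    rwa [neg_neg] at this
  · exact depthRel_neg

lemma fd_shift (x : ℚ) (t : ℤ) : fareyDepth (x + t) = fareyDepth x := by
  unfold fareyDepth
  congr 1
  ext n
  simp only [Set.mem_setOf_eq]
  constructor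
  · intro h
    have := depthRel_shift (-t) h
    push_cast at this
    rwa [add_assoc, add_neg_cancel, add_zero] at this
  · exact depthRel_shift t

lemma fd_sub (x : ℚ) (t : ℤ) : fareyDepth (x - t) = fareyDepth x := by
  have := fd_shift (x - t) t
  rw [sub_add_cancel] at this
  exact this.symm

lemma claim : ∀ q : ℕ, ∀ x : ℚ, x.den = q → 1 < q → ∀ n, DepthRel x n →
    ∃ t : ℤ, ∃ m, m + 1 ≤ n ∧ DepthRel ((x - t)⁻¹) m := by
  intro q
  induction q using Nat.strong_induction_on with
  | _ q ih =>
  intro x hq hq1 n hn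
  cases hn with
  | int x h => omega
  | step x u v m k hden hp hu hv =>
    have core : ∀ (u' v' : ℚ) (m1 k1 : ℕ), IsFareyParents x u' v' → DepthRel u' m1 →
        DepthRel v' k1 → ∃ t : ℤ, ∃ m', m' ≤ m1 ∧ DepthRel ((x - t)⁻¹) m' := by
      intro u' v' m1 k1 hp' hu' hv'
      have hp2 := hp'
      obtain ⟨a, b, c, d, hb, hd, hbd, hac, hdet, huv, hvv⟩ := hp'
      have hcop : IsCoprime a b := by
        rcases hdet with h | h
        · exact ⟨d, -c, by linarith⟩
        · exact ⟨-d, c, by linarith⟩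
      have hbpos : (0 : ℤ) < b := hb
      have hu_den : (u'.den : ℤ) = b := (ratNumDen hbpos hcop huv.symm).2
      by_cases hb1 : b = 1
      · -- u' is an integer; t = a works
        subst hb1
        refine ⟨a, 0, Nat.zero_le _, ?_⟩
        have hk1' : (x.den : ℤ) * a = x.num * 1 + (a * d - 1 * c) := by
          rw [← hac, ← hbd]; ring
        have hsub := num_den_sub x a
        have hnum : (x - a).num = -(a * d - 1 * c) := by
          rw [hsub.1]; linear_combination -hk1'
        refine .int _ (den_inv_eq_one ?_)
        rcases hdet with hdd | hdd
        · right; rw [hnum, hdd]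
        · left; rw [hnum, hdd]; ring
      · -- b ≥ 2, use induction hypothesis on u'
        have hblt : b < (x.den : ℤ) := by omega
        have hu_lt : u'.den < q := by
          have h1 : (u'.den : ℤ) < (x.den : ℤ) := by rw [hu_den]; exact hblt
          have h2 : (x.den : ℤ) = (q : ℤ) := by exact_mod_cast hq
          omega
        have hu_gt : 1 < u'.den := by
          have : (2 : ℤ) ≤ b := by omega
          omega
        obtain ⟨t, m', hm', hrel⟩ := ih u'.den hu_lt u' rfl hu_gt m1 hu'
        by_cases hyd : ((x - t)⁻¹).den = 1
        · exact ⟨t, 0, Nat.zero_le _, .int _ hyd⟩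
        · have hxd : (x - t).den ≠ 1 := by
            have h2 := (num_den_sub x t).2
            omega
          have hps : IsFareyParents (x - t) (u' - t) (v' - t) := by
            have h3 := parents_shift (-t) hp2
            push_cast at h3
            simpa [← sub_eq_add_neg] using h3
          have hpi := parents_inv hxd hyd hps
          have hv2 : DepthRel (v' - t) k1 := depthRel_sub t hv'
          obtain ⟨m2, hm2, hv3⟩ := recip_le hv2
          exact ⟨t, 1 + min m' m2, by omega, .step _ _ _ _ _ hyd hpi hrel hv3⟩
    rcases le_total m k with hmk | hmk
    · obtain ⟨t, m', hm', hr⟩ := core u v m k hp hu hv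
      exact ⟨t, m', by omega, hr⟩
    · obtain ⟨t, m', hm', hr⟩ := core v u k m (parents_swap hp) hv hu
      exact ⟨t, m', by omega, hr⟩

lemma exists_expansion : ∀ n : ℕ, ∀ x : ℚ, DepthRel x n →
    ∃ (B : List ℤ) (t : ℤ), B.length ≤ n ∧ cfVal B = x - t := by
  intro n
  induction n using Nat.strong_induction_on with
  | _ n ih =>
  intro x h
  by_cases hd : x.den = 1
  · refine ⟨[], x.num, by simp, ?_⟩
    have hxz : ((x.num : ℤ) : ℚ) = x := Rat.coe_int_num_of_den_eq_one hd
    simp [cfVal, hxz]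
  · have hpos := x.pos
    obtain ⟨t, m, hm, hrel⟩ := claim x.den x rfl (by omega) n h
    obtain ⟨B', t', hB', hval⟩ := ih m (by omega) _ hrel
    refine ⟨t' :: B', t, by simp; omega, ?_⟩
    rw [cfVal_cons, hval]
    rw [show (t' : ℚ) + ((x - t)⁻¹ - t') = (x - t)⁻¹ by ring, inv_inv]

def MinExp (B : List ℤ) : Prop :=
  ∀ (B' : List ℤ) (s : ℤ), cfVal B' = cfVal B - s → B.length ≤ B'.length

lemma minExp_tail {a : ℤ} {C : List ℤ} (h : MinExp (a :: C)) : MinExp C := by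
  intro C' s hC'
  have h2 : cfVal ((a + s) :: C') = cfVal (a :: C) - ((0 : ℤ) : ℚ) := by
    rw [cfVal_cons, cfVal_cons, hC']
    push_cast
    rw [show (a : ℚ) + (s : ℚ) + (cfVal C - (s : ℚ)) = (a : ℚ) + cfVal C by ring]
    ring
  have h3 := h _ _ h2
  simpa using h3

lemma minExp_sufRed : ∀ B : List ℤ, MinExp B → SufRed B := by
  intro B
  induction B with
  | nil => intro _; trivial
  | cons a C ih =>
    intro hmin
    have hC := minExp_tail hmin
    have hsC := ih hC
    refine ⟨?_, hsC⟩
    intro h0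
    have hval0 : cfVal (a :: C) = 0 := by
      rw [cfVal_cons_div a C hsC, h0]
      simp
    have h4 := hmin [] 0 (by rw [hval0]; simp [cfVal])
    simp at h4

lemma minExp_head {a : ℤ} {C : List ℤ} (h : MinExp (a :: C)) : a ≠ 0 := by
  intro h0
  subst h0
  cases C with
  | nil =>
    have h4 := h [] 0 (by simp [cfVal])
    simp at h4
  | cons c C' =>
    have hval : cfVal C' = cfVal (0 :: c :: C') - (c : ℚ) := by
      rw [cfVal_cons, cfVal_cons]
      push_cast
      rw [zero_add, inv_inv]
      ring
    have hlen := h C' c hval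
    simp only [List.length_cons] at hlen
    omega

lemma minExp_take (B : List ℤ) (hmin : MinExp B) : ∀ i, ce (B.take i) ≠ 0 := by
  intro i
  by_cases hlen : B.length ≤ i
  · rw [List.take_of_length_le hlen]
    exact ce_ne_of_sufRed (minExp_sufRed B hmin)
  · push_neg at hlen
    cases i with
    | zero => simp
    | succ i' =>
      cases i' with
      | zero =>
        cases B with
        | nil => simp
        | cons a C =>
          simp only [List.take_succ_cons, List.take_zero]
          have ha := minExp_head hmin
          simp [ha]
      | succ j =>
        intro h0
        set i := j + 1 + 1 with hidef
        set Q := B.take i with hQ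
        set S := B.drop i with hS
        have hQS : Q ++ S = B := List.take_append_drop i B
        have hSlen : S.length = B.length - i := by rw [hS]; exact List.length_drop
        have hSne : S ≠ [] := by
          intro hc
          rw [hc] at hSlen
          simp at hSlen
          omega
        have hsufB : SufRed B := minExp_sufRed B hmin
        have hsufS : SufRed S := by rw [hS]; exact sufRed_drop B i hsufB
        have heS : ce S ≠ 0 := ce_ne_of_sufRed hsufS
        have hgS : cg S ≠ 0 := by
          obtain ⟨s, S', hSS⟩ := List.exists_cons_of_ne_nil hSne
          have h2 : ce (s :: S') ≠ 0 ∧ SufRed S' := by rw [hSS] at hsufS; exact hsufS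
          rw [hSS]
          simp only [cg_cons]
          exact ce_ne_of_sufRed h2.2
        have heSQ : (ce S : ℚ) ≠ 0 := by exact_mod_cast heS
        have hgSQ : (cg S : ℚ) ≠ 0 := by exact_mod_cast hgS
        have hdet := det4 Q
        rw [h0] at hdet
        simp only [zero_mul, zero_sub] at hdet
        have hfg : cf Q * cg Q = 1 ∨ cf Q * cg Q = -1 := by
          rcases hdet with h | h
          · right; linarith
          · left; linarith
        have happ := append4 Q S
        have heB : ce B = cf Q * cg S := by
          rw [← hQS] at *
          rw [happ.1, h0]; ring
        have hgB : cg B = cg Q * ce S + ch Q * cg S := by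
          rw [← hQS]; exact happ.2.2.1
        have hvalB : cfVal B = (cg B : ℚ) / (ce B : ℚ) := by
          rw [← hQS]; exact cfVal_sufRed _ (by rw [hQS]; exact hsufB)
        have hvalS : cfVal S = (cg S : ℚ) / (ce S : ℚ) := cfVal_sufRed S hsufS
        have final : ∀ (S' : List ℤ) (sh : ℤ), S'.length = S.length →
            cfVal (0 :: S') = cfVal B - (sh : ℚ) → False := by
          intro S' sh hlen' hkey
          have hlen2 := hmin (0 :: S') sh (by rw [← hQS] at hkey ⊢; exact hkey)
          rw [List.length_cons, hlen'] at hlen2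
          omega
        have e1 : cfVal (0 :: S) = (ce S : ℚ) / (cg S : ℚ) := by
          rw [cfVal_cons, hvalS]
          push_cast
          rw [zero_add, inv_div]
        have e2 : cfVal (0 :: S.map (fun a => -a)) = -((ce S : ℚ) / (cg S : ℚ)) := by
          rw [cfVal_cons, cfVal_neg, hvalS]
          push_cast
          rw [zero_add, inv_neg, inv_div]
        have hcases : (cf Q = 1 ∧ cg Q = 1) ∨ (cf Q = 1 ∧ cg Q = -1) ∨
            (cf Q = -1 ∧ cg Q = 1) ∨ (cf Q = -1 ∧ cg Q = -1) := by
          rcases hfg with h | h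
          · rcases Int.mul_eq_one_iff_eq_one_or_neg_one.1 h with ⟨h1, h2⟩ | ⟨h1, h2⟩
            · exact Or.inl ⟨h1, h2⟩
            · exact Or.inr (Or.inr (Or.inr ⟨h1, h2⟩))
          · have h' : cf Q * (-cg Q) = 1 := by rw [mul_neg, h, neg_neg]
            rcases Int.mul_eq_one_iff_eq_one_or_neg_one.1 h' with ⟨h1, h2⟩ | ⟨h1, h2⟩
            · exact Or.inr (Or.inl ⟨h1, by omega⟩)
            · exact Or.inr (Or.inr (Or.inl ⟨h1, by omega⟩))
        rcases hcases with ⟨hf, hg⟩ | ⟨hf, hg⟩ | ⟨hf, hg⟩ | ⟨hf, hg⟩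
        · refine final S (ch Q) rfl ?_
          rw [e1, hvalB, heB, hgB, hf, hg]
          push_cast
          field_simp
          ring
        · refine final (S.map (fun a => -a)) (ch Q) (by simp) ?_
          rw [e2, hvalB, heB, hgB, hf, hg]
          push_cast
          field_simp
          ring
        · refine final (S.map (fun a => -a)) (-ch Q) (by simp) ?_
          rw [e2, hvalB, heB, hgB, hf, hg]
          push_cast
          rw [neg_one_mul, div_neg]
          field_simp
          ring
        · refine final S (-ch Q) rfl ?_
          rw [e1, hvalB, heB, hgB, hf, hg]
          push_cast
          rw [show ((-1 : ℚ) * ((cg S : ℤ) : ℚ)) = -((cg S : ℤ) : ℚ) from by ring, div_neg]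
          field_simp
          ring

lemma ce_facts (L : List ℤ) (hL : ∀ a ∈ L, (2 : ℤ) ≤ |a|) :
    |cg L| < |ce L| ∧ 1 ≤ |ce L| := by
  induction L with
  | nil => simp
  | cons a l ih =>
    have hl : ∀ b ∈ l, (2 : ℤ) ≤ |b| := fun b hb => hL b (List.mem_cons_of_mem a hb)
    obtain ⟨ih1, ih2⟩ := ih hl
    have ha : (2 : ℤ) ≤ |a| := hL a List.mem_cons_self
    have h1 : |a * ce l| = |a| * |ce l| := abs_mul a (ce l)
    have h2 : |a * ce l| - |-(cg l)| ≤ |a * ce l - -(cg l)| := abs_sub_abs_le_abs_sub _ _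
    have h3 : |ce l| < |a * ce l + cg l| := by
      rw [abs_neg, sub_neg_eq_add] at h2
      nlinarith [abs_nonneg (ce l), abs_nonneg (cg l)]
    constructor
    · simpa using h3
    · simp only [ce_cons]
      omega

lemma sufRed_of_two : ∀ L : List ℤ, (∀ a ∈ L, (2 : ℤ) ≤ |a|) → SufRed L := by
  intro L
  induction L with
  | nil => intro _; trivial
  | cons a l ih =>
    intro hL
    have hl : ∀ b ∈ l, (2 : ℤ) ≤ |b| := fun b hb => hL b (List.mem_cons_of_mem a hb)
    refine ⟨?_, ih hl⟩
    have := (ce_facts (a :: l) hL).2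
    intro hc
    rw [hc] at this
    simp at this

lemma fd_cfVal_le (B : List ℤ) : fareyDepth (cfVal B) ≤ B.length := by
  obtain ⟨m, hm, h⟩ := exists_depthRel_cfVal B
  exact le_trans (fd_le h) hm

lemma key (L : List ℤ) (hne : L ≠ []) (hL : ∀ a ∈ L, (2 : ℤ) ≤ |a|) :
    fareyDepth (cfVal L.reverse) ≤ fareyDepth (cfVal L) := by
  classical
  have hsufL : SufRed L := sufRed_of_two L hL
  set x := cfVal L with hxdef
  have hxval : (cg L : ℚ) / (ce L : ℚ) = x := (cfVal_sufRed L hsufL).symm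
  obtain ⟨hlt, hone⟩ := ce_facts L hL
  have heL : ce L ≠ 0 := by intro hc; rw [hc] at hone; simp at hone
  obtain ⟨ε2, hε2, hxnum, hxden⟩ := ratNumDen' heL (cop_ge L) hxval
  have hce2 : 2 ≤ |ce L| := by
    obtain ⟨a, l, rfl⟩ := List.exists_cons_of_ne_nil hne
    have h1 := (ce_facts (a :: l) hL).1
    rw [cg_cons] at h1
    have h2 := (ce_facts l (fun b hb => hL b (List.mem_cons_of_mem a hb))).2
    omega
  have hD1 : (1 : ℤ) ≤ (x.den : ℤ) := den_pos' x
  have hxden' : (x.den : ℤ) = ce L ∨ (x.den : ℤ) = -ce L := by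
    rcases hε2 with h | h
    · left; rw [hxden, h]; ring
    · right; rw [hxden, h]; ring
  have hq2 : 2 ≤ (x.den : ℤ) := by
    rcases abs_cases (ce L) with ⟨h, _⟩ | ⟨h, _⟩ <;> omega
  have hxden1 : x.den ≠ 1 := by omega
  obtain ⟨m0, _, h0⟩ := exists_depthRel_cfVal L
  set n := fareyDepth x with hndef
  have hnrel : DepthRel x n := Nat.sInf_mem ⟨m0, h0⟩
  obtain ⟨B0, t0, hB0len, hB0val⟩ := exists_expansion n x hnrel
  set T : Set ℕ := {k | ∃ (B : List ℤ) (t : ℤ), B.length = k ∧ cfVal B = x - (t : ℚ)} with hTdef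
  have hTne : T.Nonempty := ⟨B0.length, B0, t0, rfl, hB0val⟩
  obtain ⟨B, t, hBlen, hBval⟩ := Nat.sInf_mem hTne
  have hle : ∀ k ∈ T, n ≤ k := by
    rintro k ⟨B', t', hlen', hval'⟩
    obtain ⟨m, hm, hrel⟩ := exists_depthRel_cfVal B'
    rw [hval'] at hrel
    have h2 := depthRel_shift t' hrel
    rw [sub_add_cancel] at h2
    exact le_trans (fd_le h2) (hlen' ▸ hm)
  have hBn : B.length = n := by
    have h1 := hle _ (Nat.sInf_mem hTne)
    have h2 : sInf T ≤ B0.length := Nat.sInf_le ⟨B0, t0, rfl, hB0val⟩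
    omega
  have hmin : MinExp B := by
    intro B' s hv'
    rw [hBval] at hv'
    have hmem : B'.length ∈ T := ⟨B', t + s, rfl, by rw [hv']; push_cast; ring⟩
    have h3 := Nat.sInf_le hmem
    omega
  have hsufB : SufRed B := minExp_sufRed B hmin
  have htake := minExp_take B hmin
  have hsufBrev : SufRed B.reverse := by
    rw [sufRed_iff]
    intro S hS
    have h1 : S.reverse <+: B := List.reverse_suffix.mp (by simpa using hS)
    have h2 : S.reverse = B.take S.reverse.length := List.prefix_iff_eq_take.mp h1
    have h3 : ce S = ce S.reverse := (rev4 S).1.symm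
    rw [h3, h2]
    exact htake _
  have hsub := num_den_sub x t
  have heB : ce B ≠ 0 := ce_ne_of_sufRed hsufB
  have hBfrac : (cg B : ℚ) / (ce B : ℚ) = x - t := by
    rw [← hBval]; exact (cfVal_sufRed B hsufB).symm
  obtain ⟨ε1, hε1, hBnum, hBden⟩ := ratNumDen' heB (cop_ge B) hBfrac
  have hεB : ε1 * ce B = (x.den : ℤ) := by rw [← hBden, hsub.2]
  have hεBnum : ε1 * cg B = x.num - t * (x.den : ℤ) := by
    rw [← hBnum, hsub.1]
  have hε1sq : ε1 * ε1 = 1 := by rcases hε1 with h | h <;> rw [h] <;> norm_num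
  have hε2sq : ε2 * ε2 = 1 := by rcases hε2 with h | h <;> rw [h] <;> norm_num
  have hceB : ce B = ε1 * (x.den : ℤ) := by
    rcases hε1 with h | h <;> rw [h] at hεB ⊢ <;> linarith
  have hcgB : cg B = ε1 * (x.num - t * (x.den : ℤ)) := by
    rcases hε1 with h | h <;> rw [h] at hεBnum ⊢ <;> linarith
  have hceL : ce L = ε2 * (x.den : ℤ) := by
    rcases hε2 with h | h <;> rw [h] at hxden ⊢ <;> linarith
  have hcgL : cg L = ε2 * x.num := by
    rcases hε2 with h | h <;> rw [h] at hxnum ⊢ <;> linarith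
  have hdB : ∃ δ : ℤ, (δ = 1 ∨ δ = -1) ∧ ce B * ch B - cf B * cg B = δ := by
    rcases det4 B with h | h
    · exact ⟨1, Or.inl rfl, h⟩
    · exact ⟨-1, Or.inr rfl, h⟩
  obtain ⟨δB, hδB1, hδB⟩ := hdB
  have hdL : ∃ δ : ℤ, (δ = 1 ∨ δ = -1) ∧ ce L * ch L - cf L * cg L = δ := by
    rcases det4 L with h | h
    · exact ⟨1, Or.inl rfl, h⟩
    · exact ⟨-1, Or.inr rfl, h⟩
  obtain ⟨δL, hδL1, hδL⟩ := hdL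
  have hδLsq : δL * δL = 1 := by rcases hδL1 with h | h <;> rw [h] <;> norm_num
  rw [hceB, hcgB] at hδB
  rw [hceL, hcgL] at hδL
  have E1 : (x.den : ℤ) * ch B - cf B * (x.num - t * (x.den : ℤ)) = ε1 * δB := by
    linear_combination ε1 * hδB +
      (-((x.den : ℤ) * ch B - cf B * (x.num - t * (x.den : ℤ)))) * hε1sq
  have E2 : (x.den : ℤ) * ch L - cf L * x.num = ε2 * δL := by
    linear_combination ε2 * hδL + (-((x.den : ℤ) * ch L - cf L * x.num)) * hε2sq
  have hkeyT : (cf B - ε1 * δB * ε2 * δL * cf L) * x.num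
      = (x.den : ℤ) * (ch B + t * cf B - ε1 * δB * ε2 * δL * ch L) := by
    linear_combination (-1 : ℤ) * E1 + (ε1 * δB * ε2 * δL) * E2 +
      (ε1 * δB * δL * δL) * hε2sq + (ε1 * δB) * hδLsq
  have hdvd : ((x.den : ℤ)) ∣ (cf B - ε1 * δB * ε2 * δL * cf L) := by
    apply (coprime_num_den x).symm.dvd_of_dvd_mul_right
    exact ⟨ch B + t * cf B - ε1 * δB * ε2 * δL * ch L, hkeyT⟩
  obtain ⟨k, hk⟩ := hdvd
  have hcfB : cf B = ε1 * δB * ε2 * δL * cf L + (x.den : ℤ) * k := by linarith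
  have hvalE : cfVal B.reverse = (cf B : ℚ) / (ce B : ℚ) := by
    rw [cfVal_sufRed _ hsufBrev, (rev4 B).1, (rev4 B).2.2.1]
  have hLrev : ∀ a ∈ L.reverse, (2 : ℤ) ≤ |a| := fun a ha => hL a (List.mem_reverse.1 ha)
  have hsufLrev : SufRed L.reverse := sufRed_of_two _ hLrev
  have hvalLrev : cfVal L.reverse = (cf L : ℚ) / (ce L : ℚ) := by
    rw [cfVal_sufRed _ hsufLrev, (rev4 L).1, (rev4 L).2.2.1]
  have hqQ : (((x.den : ℤ)) : ℚ) ≠ 0 := by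
    have h5 : (x.den : ℤ) ≠ 0 := by omega
    exact_mod_cast h5
  have hval_final : cfVal B.reverse
      = ((ε1 * δB * ε2 * δL * ε1 * ε2 : ℤ) : ℚ) * cfVal L.reverse + ((ε1 * k : ℤ) : ℚ) := by
    rw [hvalE, hvalLrev, hceB, hceL, hcfB]
    rcases hε1 with h1 | h1 <;> rcases hε2 with h2 | h2 <;> rw [h1, h2] <;> push_cast <;>
      field_simp <;> ring
  have hσ : ε1 * δB * ε2 * δL * ε1 * ε2 = 1 ∨ ε1 * δB * ε2 * δL * ε1 * ε2 = -1 := by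
    rcases hε1 with h1 | h1 <;> rcases hε2 with h2 | h2 <;> rcases hδB1 with h3 | h3 <;>
      rcases hδL1 with h4 | h4 <;> rw [h1, h2, h3, h4] <;> norm_num
  have hfd2 : fareyDepth (cfVal B.reverse) = fareyDepth (cfVal L.reverse) := by
    rw [hval_final]
    rcases hσ with h | h
    · rw [h, Int.cast_one, one_mul]
      exact fd_shift _ (ε1 * k)
    · rw [h]
      rw [show ((-1 : ℤ) : ℚ) * cfVal L.reverse + ((ε1 * k : ℤ) : ℚ)
          = -(cfVal L.reverse - ((ε1 * k : ℤ) : ℚ)) from by push_cast; ring]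
      rw [fd_neg, fd_sub]
  calc fareyDepth (cfVal L.reverse) = fareyDepth (cfVal B.reverse) := hfd2.symm
    _ ≤ B.reverse.length := fd_cfVal_le _
    _ = n := by rw [List.length_reverse, hBn]

end CFAux

/-- For a nonempty list `a` of even nonzero integers, `d([a]) = d([rev(a)])` and
`d([a]) = d([−a])`. -/
theorem stmt6 (L : List ℤ) (hL : L ≠ []) (h : ∀ a ∈ L, Even a ∧ a ≠ 0) :
    fareyDepth (cfVal L) = fareyDepth (cfVal L.reverse) ∧
      fareyDepth (cfVal L) = fareyDepth (cfVal (L.map (fun a => -a))) := by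
  have habs : ∀ a ∈ L, (2 : ℤ) ≤ |a| := by
    intro a ha
    obtain ⟨hev, hnz⟩ := h a ha
    obtain ⟨r, rfl⟩ := hev
    have hr : r ≠ 0 := by rintro rfl; simp at hnz
    have h1 : 1 ≤ |r| := abs_pos.2 hr
    have h2 : |r + r| = 2 * |r| := by
      rw [← two_mul, abs_mul]
      norm_num
    omega
  constructor
  · refine le_antisymm ?_ (CFAux.key L hL habs)
    have hrev : fareyDepth (cfVal L.reverse.reverse) ≤ fareyDepth (cfVal L.reverse) :=
      CFAux.key L.reverse (by simpa using hL) (fun a ha => habs a (List.mem_reverse.1 ha))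
    rwa [List.reverse_reverse] at hrev
  · rw [CFAux.cfVal_neg, CFAux.fd_neg]
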